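/- Let K be an algebraically closed field and let k ≥ 1 and n ≥ 2k. Then there exist a k×n matrix X over K of rank k and λ ∈ (K^*)^n such that X·diag(λ)·Xᵀ = 0. (Equivalently, the set of self-projecting points of Gr(k,n) is nonempty when n ≥ 2k.) -/
import Mathlib


/-- Over an algebraically closed field `K`, for `k ≥ 1` and `n ≥ 2k` there
exists a `k × n` matrix `X` of rank `k` and `λ ∈ (K^*)^n` with `X · diag(λ) · Xᵀ = 0`;
i.e. the set of self-projecting points of `Gr(k,n)` is nonempty when `n ≥ 2k`. -/
theorem exists_selfProjecting_of_two_mul_le {K : Type*} [Field K] [IsAlgClosed K] {k n : ℕ}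
    (hk : 1 ≤ k) (hn : 2 * k ≤ n) :
    ∃ (X : Matrix (Fin k) (Fin n) K) (lam : Fin n → K),
      X.rank = k ∧ (∀ i, lam i ≠ 0) ∧ X * Matrix.diagonal lam * X.transpose = 0 := by
  have h1 : ∀ i : Fin k, (i : ℕ) < n := fun i => by have := i.isLt; omega
  have h2 : ∀ i : Fin k, (i : ℕ) + k < n := fun i => by have := i.isLt; omega
  set a : Fin k → Fin n := fun i => ⟨i, h1 i⟩ with ha
  set b : Fin k → Fin n := fun i => ⟨(i : ℕ) + k, h2 i⟩ with hb
  set X : Matrix (Fin k) (Fin n) K :=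
    fun i j => (if j = a i then (1 : K) else 0) + (if j = b i then 1 else 0) with hX
  set lam : Fin n → K := fun j => if (j : ℕ) < k then 1 else -1 with hlam
  have hab : ∀ i i' : Fin k, a i ≠ b i' := by
    intro i i' h
    have : (i : ℕ) = (i' : ℕ) + k := congrArg Fin.val h
    have := i.isLt; omega
  have haa : ∀ i i' : Fin k, a i = a i' ↔ i = i' := by
    intro i i'
    simp [ha, Fin.ext_iff]
  have hbb : ∀ i i' : Fin k, b i = b i' ↔ i = i' := by
    intro i i'
    simp [hb, Fin.ext_iff]
  have hXa : ∀ i i' : Fin k, X i' (a i) = if i = i' then 1 else 0 := by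
    intro i i'
    simp only [hX]
    rw [if_neg (hab i i')]
    simp [haa i i', eq_comm]
  have hXb : ∀ i i' : Fin k, X i' (b i) = if i = i' then 1 else 0 := by
    intro i i'
    simp only [hX]
    rw [if_neg (fun h => hab i' i h.symm)]
    simp [hbb i i', eq_comm]
  have hlamA : ∀ i : Fin k, lam (a i) = 1 := by
    intro i; simp only [hlam, ha]; exact if_pos i.isLt
  have hlamB : ∀ i : Fin k, lam (b i) = -1 := by
    intro i; simp only [hlam, hb]
    exact if_neg (by omega)
  -- right inverse
  set Y : Matrix (Fin n) (Fin k) K := fun j i => if j = a i then 1 else 0 with hY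
  have hXY : X * Y = 1 := by
    ext i i'
    rw [Matrix.mul_apply]
    have : ∀ j : Fin n, X i j * Y j i' = if j = a i' then X i j else 0 := by
      intro j
      simp only [hY]
      split <;> simp
    simp only [this, Finset.sum_ite_eq', Finset.mem_univ, if_true]
    rw [hXa i' i]
    simp [Matrix.one_apply, eq_comm]
  refine ⟨X, lam, ?_, ?_, ?_⟩
  · refine le_antisymm ?_ ?_
    · simpa using X.rank_le_card_height
    · calc (k : ℕ) = (1 : Matrix (Fin k) (Fin k) K).rank := by simp [Matrix.rank_one]
        _ = (X * Y).rank := by rw [hXY]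
        _ ≤ X.rank := Matrix.rank_mul_le_left X Y
  · intro j
    simp only [hlam]
    split
    · exact one_ne_zero
    · exact neg_ne_zero.mpr one_ne_zero
  · ext i i'
    rw [Matrix.mul_apply]
    have key : ∀ j : Fin n, (X * Matrix.diagonal lam) i j * X.transpose j i' =
        (if j = a i then lam j * X i' j else 0) + (if j = b i then lam j * X i' j else 0) := by
      intro j
      rw [Matrix.mul_diagonal, Matrix.transpose_apply]
      by_cases hja : j = a i
      · subst hja
        rw [if_pos rfl, if_neg (hab i i), hXa i i, if_pos rfl, one_mul, add_zero]
      · by_cases hjb : j = b i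
        · subst hjb
          rw [if_neg hja, if_pos rfl, hXb i i, if_pos rfl, one_mul, zero_add]
        · rw [if_neg hja, if_neg hjb]
          have hx0 : X i j = 0 := by
            simp only [hX]
            rw [if_neg hja, if_neg hjb, add_zero]
          rw [hx0, zero_mul, zero_mul, add_zero]
    simp only [key, Finset.sum_add_distrib, Finset.sum_ite_eq', Finset.mem_univ, if_true]
    rw [hlamA i, hlamB i, hXa i i', hXb i i']
    simp only [Matrix.zero_apply]
    split <;> ring
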